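/- Let n ≥ 4, let G = K_n be the complete graph on n vertices, all of type A, and let e = ij be any edge. Then g_{K_n}(i,j) = 3, g_{K_n − e}(i,j) = 4, and g is unchanged on all other pairs; consequently, under the reliable cost with δ = 1, C_rel(i, K_n − e) − C_rel(i, K_n) = A/2 − c_A. Hence removing any edge strictly increases the cost of its endpoints if and only if c_A < A/2; i.e., when failures are frequent (δ = 1), the type-A players' complete graph is stable against edge removals if and only if c_A < A/2. -/

import Mathlib

open SimpleGraph Classical
open scoped ENNReal

noncomputable section

variable {V : Type*} [Fintype V] [DecidableEq V]

/-- The degree of node `i` in `G`. -/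
def degE (G : SimpleGraph V) (i : V) : ℕ := (G.neighborSet i).ncard

/-- The hop distance between `i` and `j`, with value `+∞` for unreachable pairs. -/
def dE (G : SimpleGraph V) (i j : V) : ℝ≥0∞ :=
  if G.Reachable i j then (G.dist i j : ℝ≥0∞) else ⊤

/-- `g_G(i,j)`: the minimum of `length p + length q` over pairs `(p, q)` of
edge-disjoint `i`–`j` paths (equivalently, the length of a shortest cycle through `i`
and `j`), with value `+∞` if no such pair exists. -/
def gdist (G : SimpleGraph V) (i j : V) : ℝ≥0∞ :=
  sInf {n : ℝ≥0∞ | ∃ p q : G.Path i j,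
    (∀ e ∈ (p : G.Walk i j).edges, e ∉ (q : G.Walk i j).edges) ∧
    n = ((p : G.Walk i j).length : ℝ≥0∞) + ((q : G.Walk i j).length : ℝ≥0∞)}

/-- `G` with the edge `ij` removed. -/
def delE (G : SimpleGraph V) (i j : V) : SimpleGraph V := G.deleteEdges {s(i, j)}

/-- `G` with the edge `ij` added. -/
def addE (G : SimpleGraph V) (i j : V) : SimpleGraph V := G ⊔ edge i j

/-- The reliable cost of node `i` under symmetric reliability requirements (`τ = 1`)
with failure weight `δ = 1`. -/
def costRel (TA : Finset V) (A cA cB : ℝ) (G : SimpleGraph V) (i : V) : ℝ≥0∞ :=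
  (degE G i : ℝ≥0∞) * ENNReal.ofReal (if i ∈ TA then cA else cB)
    + ENNReal.ofReal (A / 2) * ∑ j ∈ TA.erase i, gdist G i j
    + ENNReal.ofReal (1 / 2) * ∑ j ∈ TAᶜ.erase i, gdist G i j

/-- Pairwise stability for the reliable model: removing any present edge strictly
increases the reliable cost of both endpoints, and adding any absent edge strictly
increases the reliable cost of at least one endpoint. -/
def PairwiseStableRel (TA : Finset V) (A cA cB : ℝ) (G : SimpleGraph V) : Prop :=
  (∀ i j : V, G.Adj i j →
    costRel TA A cA cB G i < costRel TA A cA cB (delE G i j) i ∧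
    costRel TA A cA cB G j < costRel TA A cA cB (delE G i j) j) ∧
  (∀ i j : V, i ≠ j → ¬ G.Adj i j →
    costRel TA A cA cB G i < costRel TA A cA cB (addE G i j) i ∨
    costRel TA A cA cB G j < costRel TA A cA cB (addE G i j) j)

/-- The reliable cost (`δ = 1`) of a type-A node `i` when all vertices are of type A:
`C_rel(i,G) = deg_G(i)·c_A + (A/2)·∑_{j ≠ i} g_G(i,j)`. -/
def CrelA (A cA : ℝ) (G : SimpleGraph V) (i : V) : ℝ≥0∞ :=
  (degE G i : ℝ≥0∞) * ENNReal.ofReal cA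
    + ENNReal.ofReal (A / 2) * ∑ j ∈ Finset.univ.erase i, gdist G i j

set_option linter.unusedSectionVars false

lemma edge_mem_of_len1 {G : SimpleGraph V} {u v : V} (w : G.Walk u v) (h : w.length = 1) :
    s(u,v) ∈ w.edges := by
  cases w with
  | nil => simp at h
  | cons h' p =>
    simp at h
    have := h.eq
    subst this; simp

lemma adj_of_len1 {G : SimpleGraph V} {u v : V} (w : G.Walk u v) (h : w.length = 1) :
    G.Adj u v := by
  cases w with
  | nil => simp at h
  | cons h' p =>
    simp at h
    have := h.eq
    subst this; exact h'

lemma one_le_len {G : SimpleGraph V} {u v : V} (h : u ≠ v) (w : G.Walk u v) : 1 ≤ w.length := by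
  cases w with
  | nil => simp at h
  | cons h' p => simp

lemma three_le_gdist (G : SimpleGraph V) {u v : V} (h : u ≠ v) : 3 ≤ gdist G u v := by
  refine le_sInf ?_
  rintro x ⟨p, q, hdisj, rfl⟩
  have h3 : 3 ≤ (p : G.Walk u v).length + (q : G.Walk u v).length := by
    have hp := one_le_len h (p : G.Walk u v)
    have hq := one_le_len h (q : G.Walk u v)
    by_contra hc
    push_neg at hc
    have hp1 : (p : G.Walk u v).length = 1 := by omega
    have hq1 : (q : G.Walk u v).length = 1 := by omega
    exact hdisj _ (edge_mem_of_len1 _ hp1) (edge_mem_of_len1 _ hq1)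
  exact_mod_cast Nat.cast_le.mpr h3 |>.trans_eq (by push_cast; ring)

lemma four_le_gdist (G : SimpleGraph V) {u v : V} (h : u ≠ v) (hadj : ¬ G.Adj u v) :
    4 ≤ gdist G u v := by
  refine le_sInf ?_
  rintro x ⟨p, q, hdisj, rfl⟩
  have key : ∀ w : G.Walk u v, 2 ≤ w.length := by
    intro w
    have := one_le_len h w
    rcases Nat.lt_or_ge w.length 2 with hl | hl
    · have : w.length = 1 := by omega
      exact absurd (adj_of_len1 w this) hadj
    · exact hl
  have h4 : 4 ≤ (p : G.Walk u v).length + (q : G.Walk u v).length := by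
    have := key p; have := key q; omega
  exact_mod_cast Nat.cast_le.mpr h4 |>.trans_eq (by push_cast; ring)

def path2 {G : SimpleGraph V} {u w v : V} (h1 : G.Adj u w) (h2 : G.Adj w v) (huv : u ≠ v) :
    G.Path u v :=
  ⟨Walk.cons h1 (Walk.cons h2 Walk.nil), by
    simp [Walk.isPath_def, h1.ne, h2.ne, huv]⟩

lemma gdist_le_three {G : SimpleGraph V} {u v w : V} (h1 : G.Adj u v) (h2 : G.Adj u w)
    (h3 : G.Adj w v) : gdist G u v ≤ 3 := by
  refine sInf_le ⟨Path.singleton h1, path2 h2 h3 h1.ne, ?_, by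
    simp [Path.singleton, path2]; norm_num⟩
  intro e he
  simp [Path.singleton] at he
  subst he
  have hne1 : u ≠ w := h2.ne
  have hne2 : w ≠ v := h3.ne
  simp [path2, Sym2.eq_iff]
  exact ⟨⟨fun h => hne2 h.symm, fun h => absurd h hne1⟩, hne1, fun _ h => hne2 h.symm⟩

lemma gdist_le_four {G : SimpleGraph V} {u v w1 w2 : V} (huv : u ≠ v) (hw : w1 ≠ w2)
    (h1 : G.Adj u w1) (h2 : G.Adj w1 v) (h3 : G.Adj u w2) (h4 : G.Adj w2 v) :
    gdist G u v ≤ 4 := by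
  refine sInf_le ⟨path2 h1 h2 huv, path2 h3 h4 huv, ?_, by
    simp [path2]; norm_num⟩
  intro e he
  have n1 : u ≠ w1 := h1.ne
  have n2 : w1 ≠ v := h2.ne
  have n3 : u ≠ w2 := h3.ne
  have n4 : w2 ≠ v := h4.ne
  have n1' := n1.symm; have n2' := n2.symm; have n3' := n3.symm; have n4' := n4.symm
  have hw' := hw.symm; have huv' := huv.symm
  simp [path2] at he
  rcases he with rfl | rfl <;> simp [path2, Sym2.eq_iff] <;> tauto

lemma gdist_top (h2 : 2 < Fintype.card V) {u v : V} (h : u ≠ v) :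
    gdist (⊤ : SimpleGraph V) u v = 3 := by
  obtain ⟨w, hw⟩ : (({u, v} : Finset V)ᶜ).Nonempty := by
    rw [← Finset.card_pos, Finset.card_compl]
    have := Finset.card_insert_le u ({v} : Finset V)
    simp at this ⊢
    omega
  simp [Finset.mem_compl, Finset.mem_insert, Finset.mem_singleton, not_or] at hw
  refine le_antisymm (gdist_le_three (w := w) (by simp [h]) (by simp only [top_adj]; exact Ne.symm hw.1) (by simp [hw.2])) (three_le_gdist _ h)

lemma gdist_del_same (h4 : 4 ≤ Fintype.card V) {u v : V} (h : u ≠ v) :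
    gdist (delE (⊤ : SimpleGraph V) u v) u v = 4 := by
  obtain ⟨w1, hw1, w2, hw2, hww⟩ : ∃ a ∈ ({u, v} : Finset V)ᶜ, ∃ b ∈ ({u, v} : Finset V)ᶜ, a ≠ b := by
    apply Finset.one_lt_card.mp
    rw [Finset.card_compl]
    have := Finset.card_insert_le u ({v} : Finset V)
    simp at this ⊢
    omega
  simp [Finset.mem_compl, Finset.mem_insert, Finset.mem_singleton, not_or] at hw1 hw2
  have hadj : ∀ a b : V, a ≠ b → s(a, b) ≠ s(u, v) → (delE (⊤ : SimpleGraph V) u v).Adj a b := by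
    intro a b hab hs
    simp [delE, SimpleGraph.deleteEdges_adj, hab, hs]
  have hne : ¬ (delE (⊤ : SimpleGraph V) u v).Adj u v := by
    simp [delE, SimpleGraph.deleteEdges_adj]
  refine le_antisymm (gdist_le_four h hww
    (hadj _ _ (Ne.symm hw1.1) ?_) (hadj _ _ hw1.2 ?_) (hadj _ _ (Ne.symm hw2.1) ?_) (hadj _ _ hw2.2 ?_))
    (four_le_gdist _ h hne) <;>
  · simp [Sym2.eq_iff]
    tauto

lemma gdist_del_other (h4 : 4 ≤ Fintype.card V) {i j u v : V} (hij : i ≠ j) (huv : u ≠ v)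
    (hs : s(u, v) ≠ s(i, j)) :
    gdist (delE (⊤ : SimpleGraph V) i j) u v = 3 := by
  have hadj : ∀ a b : V, a ≠ b → s(a, b) ≠ s(i, j) → (delE (⊤ : SimpleGraph V) i j).Adj a b := by
    intro a b hab hs'
    simp [delE, SimpleGraph.deleteEdges_adj, hab, hs']
  set b : V := if u = i then j else if u = j then i else if v = i then j else if v = j then i
    else u with hb
  obtain ⟨w, hw⟩ : ∃ w : V, w ∉ ({u, v, b} : Finset V) := by
    by_contra hc
    push_neg at hc
    have hsub : (Finset.univ : Finset V) ⊆ {u, v, b} := fun x _ => hc x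
    have hcard := Finset.card_le_card hsub
    rw [Finset.card_univ] at hcard
    have hb3 : ({u, v, b} : Finset V).card ≤ 3 := by
      calc ({u, v, b} : Finset V).card ≤ ({v, b} : Finset V).card + 1 :=
            Finset.card_insert_le _ _
        _ ≤ (({b} : Finset V).card + 1) + 1 :=
            Nat.add_le_add_right (Finset.card_insert_le _ _) _
        _ = 3 := by simp
    omega
  simp only [Finset.mem_insert, Finset.mem_singleton, not_or] at hw
  obtain ⟨hwu, hwv, hwb⟩ := hw
  have h1 : s(u, w) ≠ s(i, j) := by
    intro heq
    rw [Sym2.eq_iff] at heq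
    rcases heq with ⟨hui, hwj⟩ | ⟨huj, hwi⟩
    · exact hwb (by rw [hb, if_pos hui]; exact hwj)
    · have hui : ¬ u = i := fun h => hij (h.symm.trans huj)
      exact hwb (by rw [hb, if_neg hui, if_pos huj]; exact hwi)
  have h2 : s(w, v) ≠ s(i, j) := by
    intro heq
    rw [Sym2.eq_iff] at heq
    rcases heq with ⟨hwi, hvj⟩ | ⟨hwj, hvi⟩
    · have hui : ¬ u = i := fun h => hs (by rw [h, hvj])
      have huj : ¬ u = j := fun h => huv (h.trans hvj.symm)
      have hvi : ¬ v = i := fun h => hij (h.symm.trans hvj)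
      exact hwb (by rw [hb, if_neg hui, if_neg huj, if_neg hvi, if_pos hvj]; exact hwi)
    · have hui : ¬ u = i := fun h => huv (h.trans hvi.symm)
      have huj : ¬ u = j := fun h => hs (by rw [h, hvi, Sym2.eq_swap])
      exact hwb (by rw [hb, if_neg hui, if_neg huj, if_pos hvi]; exact hwj)
  exact le_antisymm (gdist_le_three (hadj _ _ huv hs)
    (hadj _ _ (Ne.symm hwu) h1) (hadj _ _ hwv h2)) (three_le_gdist _ huv)

lemma delE_comm (G : SimpleGraph V) (u v : V) : delE G u v = delE G v u := by
  unfold delE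
  rw [Sym2.eq_swap]

lemma degE_del {u v : V} (huv : u ≠ v) :
    degE (delE (⊤ : SimpleGraph V) u v) u + 1 = degE (⊤ : SimpleGraph V) u := by
  have hset : (delE (⊤ : SimpleGraph V) u v).neighborSet u
      = (⊤ : SimpleGraph V).neighborSet u \ {v} := by
    ext x
    simp only [mem_neighborSet, delE, deleteEdges_adj, top_adj, Set.mem_diff,
      Set.mem_singleton_iff, Set.mem_singleton_iff, Sym2.eq_iff]
    constructor
    · rintro ⟨hux, hne⟩
      exact ⟨hux, fun hxv => hne (Or.inl ⟨trivial, hxv⟩)⟩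
    · rintro ⟨hux, hxv⟩
      refine ⟨hux, ?_⟩
      rintro (⟨-, h⟩ | ⟨h1, -⟩)
      · exact hxv h
      · exact huv h1
  unfold degE
  rw [hset]
  exact Set.ncard_diff_singleton_add_one (by simpa using huv.symm) (Set.toFinite _)

lemma sum_gdist_del (h4 : 4 ≤ Fintype.card V) {u v : V} (huv : u ≠ v) :
    ∑ j ∈ Finset.univ.erase u, gdist (delE (⊤ : SimpleGraph V) u v) u j
      = (∑ j ∈ Finset.univ.erase u, gdist (⊤ : SimpleGraph V) u j) + 1 := by
  have hv : v ∈ Finset.univ.erase u := by simp [Ne.symm huv]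
  have hrest : ∀ j ∈ (Finset.univ.erase u).erase v,
      gdist (delE (⊤ : SimpleGraph V) u v) u j = gdist (⊤ : SimpleGraph V) u j := by
    intro j hj
    have hjv : j ≠ v := (Finset.mem_erase.mp hj).1
    have hju : j ≠ u := (Finset.mem_erase.mp (Finset.mem_erase.mp hj).2).1
    have hsym : s(u, j) ≠ s(u, v) := by
      intro hEq
      rw [Sym2.eq_iff] at hEq
      rcases hEq with ⟨-, h⟩ | ⟨h1, h2⟩
      · exact hjv h
      · exact huv h1
    rw [gdist_del_other h4 huv (Ne.symm hju) hsym, gdist_top (by omega) (Ne.symm hju)]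
  calc ∑ j ∈ Finset.univ.erase u, gdist (delE (⊤ : SimpleGraph V) u v) u j
      = gdist (delE (⊤ : SimpleGraph V) u v) u v
        + ∑ j ∈ (Finset.univ.erase u).erase v, gdist (delE (⊤ : SimpleGraph V) u v) u j :=
        (Finset.add_sum_erase _ _ hv).symm
    _ = 4 + ∑ j ∈ (Finset.univ.erase u).erase v, gdist (⊤ : SimpleGraph V) u j := by
        rw [gdist_del_same h4 huv, Finset.sum_congr rfl hrest]
    _ = (gdist (⊤ : SimpleGraph V) u v
        + ∑ j ∈ (Finset.univ.erase u).erase v, gdist (⊤ : SimpleGraph V) u j) + 1 := by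
        rw [gdist_top (by omega) huv]
        ring
    _ = _ := by rw [Finset.add_sum_erase _ _ hv]

lemma sum_gdist_top_ne_top (h4 : 4 ≤ Fintype.card V) (u : V) :
    ∑ j ∈ Finset.univ.erase u, gdist (⊤ : SimpleGraph V) u j ≠ ⊤ := by
  rw [← lt_top_iff_ne_top]
  apply ENNReal.sum_lt_top.mpr
  intro j hj
  rw [gdist_top (by omega) (Ne.symm (Finset.mem_erase.mp hj).1)]
  norm_num

lemma CrelA_key (h4 : 4 ≤ Fintype.card V) (A cA : ℝ) {u v : V} (huv : u ≠ v) :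
    CrelA A cA (delE (⊤ : SimpleGraph V) u v) u + ENNReal.ofReal cA
      = CrelA A cA (⊤ : SimpleGraph V) u + ENNReal.ofReal (A / 2) := by
  unfold CrelA
  rw [sum_gdist_del h4 huv, ← degE_del huv]
  push_cast
  ring

lemma CrelA_top_ne_top (h4 : 4 ≤ Fintype.card V) (A cA : ℝ) (u : V) :
    CrelA A cA (⊤ : SimpleGraph V) u ≠ ⊤ := by
  unfold CrelA
  simp [ENNReal.add_ne_top, ENNReal.mul_ne_top, ENNReal.natCast_ne_top,
    ENNReal.ofReal_ne_top, sum_gdist_top_ne_top h4 u]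

lemma CrelA_del_ne_top (h4 : 4 ≤ Fintype.card V) (A cA : ℝ) {u v : V} (huv : u ≠ v) :
    CrelA A cA (delE (⊤ : SimpleGraph V) u v) u ≠ ⊤ := by
  unfold CrelA
  rw [sum_gdist_del h4 huv]
  have := sum_gdist_top_ne_top h4 u
  simp [ENNReal.add_ne_top, ENNReal.mul_ne_top, ENNReal.natCast_ne_top,
    ENNReal.ofReal_ne_top, this]

lemma CrelA_lt_iff (h4 : 4 ≤ Fintype.card V) (A cA : ℝ) {u v : V} (huv : u ≠ v) :
    (CrelA A cA (⊤ : SimpleGraph V) u < CrelA A cA (delE (⊤ : SimpleGraph V) u v) u)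
      ↔ ENNReal.ofReal cA < ENNReal.ofReal (A / 2) := by
  have hkey := CrelA_key h4 A cA huv
  have hT := CrelA_top_ne_top h4 A cA u
  have hD := CrelA_del_ne_top h4 A cA huv
  constructor
  · intro hlt
    have : CrelA A cA (⊤ : SimpleGraph V) u + ENNReal.ofReal cA
        < CrelA A cA (delE (⊤ : SimpleGraph V) u v) u + ENNReal.ofReal cA :=
      ENNReal.add_lt_add_right ENNReal.ofReal_ne_top hlt
    rw [hkey] at this
    exact (ENNReal.add_lt_add_iff_left hT).mp this
  · intro hlt
    have : CrelA A cA (⊤ : SimpleGraph V) u + ENNReal.ofReal cA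
        < CrelA A cA (⊤ : SimpleGraph V) u + ENNReal.ofReal (A / 2) :=
      (ENNReal.add_lt_add_iff_left hT).mpr hlt
    rw [← hkey] at this
    exact lt_of_add_lt_add_right this


/-- Let `n ≥ 4`, `G = K_n` (all vertices of type A) and `e = ij` any
edge. Then `g_{K_n}(i,j) = 3`, `g_{K_n - e}(i,j) = 4`, `g` is unchanged on all other
pairs, and `C_rel(i, K_n - e) - C_rel(i, K_n) = A/2 - c_A` (stated additively).
Hence removing any edge strictly increases the cost of both of its endpoints if and
only if `c_A < A/2`: the type-A complete graph is stable against edge removals iff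
`c_A < A/2`. -/
theorem stmt14 (n : ℕ) (hn : 4 ≤ n) (A cA : ℝ) (hA : 1 < A) (hcA : 1 < cA)
    (i j : Fin n) (hij : i ≠ j) :
    gdist (⊤ : SimpleGraph (Fin n)) i j = 3 ∧
    gdist (delE (⊤ : SimpleGraph (Fin n)) i j) i j = 4 ∧
    (∀ u v : Fin n, u ≠ v → s(u, v) ≠ s(i, j) →
      gdist (delE (⊤ : SimpleGraph (Fin n)) i j) u v =
        gdist (⊤ : SimpleGraph (Fin n)) u v) ∧
    (CrelA A cA (delE (⊤ : SimpleGraph (Fin n)) i j) i + ENNReal.ofReal cA =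
      CrelA A cA (⊤ : SimpleGraph (Fin n)) i + ENNReal.ofReal (A / 2)) ∧
    ((∀ u v : Fin n, u ≠ v →
        CrelA A cA (⊤ : SimpleGraph (Fin n)) u <
          CrelA A cA (delE (⊤ : SimpleGraph (Fin n)) u v) u ∧
        CrelA A cA (⊤ : SimpleGraph (Fin n)) v <
          CrelA A cA (delE (⊤ : SimpleGraph (Fin n)) u v) v) ↔
      cA < A / 2) := by
  have h4 : 4 ≤ Fintype.card (Fin n) := by simpa using hn
  refine ⟨gdist_top (by omega) hij, gdist_del_same h4 hij, fun u v huv hs => ?_, CrelA_key h4 A cA hij, ?_⟩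
  · rw [gdist_del_other h4 hij huv hs, gdist_top (by omega) huv]
  · have hA2 : (0:ℝ) < A / 2 := by linarith
    constructor
    · intro h
      have := ((h i j hij).1)
      rw [CrelA_lt_iff h4 A cA hij] at this
      exact (ENNReal.ofReal_lt_ofReal_iff hA2).mp this
    · intro h u v huv
      refine ⟨(CrelA_lt_iff h4 A cA huv).mpr ((ENNReal.ofReal_lt_ofReal_iff hA2).mpr h), ?_⟩
      rw [delE_comm]
      exact (CrelA_lt_iff h4 A cA (Ne.symm huv)).mpr ((ENNReal.ofReal_lt_ofReal_iff hA2).mpr h)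

end
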